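/- Let n ≥ 1, Δ ≥ 1 and L be integers with L ≥ 8(Δ+n−1). Run Peek Reset with latency L on an n-th order time-homogeneous Markov reward instance whose transition digraph has diameter Δ. Then OPT ≤ (1 + 2(Δ+n)(Δ+n−1)/(L − 8(Δ+n−1) + 1))·ON; that is, the competitive ratio of Peek Reset is at most 1 + 2(Δ+n)(Δ+n−1)/(L − 8(Δ+n−1) + 1). -/

import Mathlib

open Finset

lemma sumIcoSplit (f : ℤ → ℝ) {a b c : ℤ} (h1 : a ≤ b) (h2 : b ≤ c) :
    ∑ t ∈ Finset.Ico a c, f t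
      = (∑ t ∈ Finset.Ico a b, f t) + ∑ t ∈ Finset.Ico b c, f t := by
  rw [← Finset.sum_union (Finset.Ico_disjoint_Ico_consecutive a b c),
    Finset.Ico_union_Ico_eq_Ico h1 h2]

lemma sumPhases (f : ℤ → ℝ) (τ : ℕ → ℤ) (hτ : ∀ i, τ i ≤ τ (i+1)) (N : ℕ) :
    ∑ i ∈ Finset.range N, ∑ t ∈ Finset.Ico (τ i) (τ (i+1)), f t
      = ∑ t ∈ Finset.Ico (τ 0) (τ N), f t := by
  induction N with
  | zero => simp
  | succ N ih =>
    have hmono : τ 0 ≤ τ N := by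
      clear ih
      induction N with
      | zero => exact le_refl _
      | succ N ih2 => exact le_trans ih2 (hτ N)
    rw [Finset.sum_range_succ, ih, sumIcoSplit f hmono (hτ N)]

lemma IccIco (a b : ℤ) : Finset.Icc a (b - 1) = Finset.Ico a b := by
  ext x; simp only [Finset.mem_Icc, Finset.mem_Ico]; omega

lemma natLtDivAddOneMul (a b : ℕ) (h : 0 < b) : a < (a/b+1)*b := by
  have h1 := Nat.div_add_mod a b
  have h2 : a % b < b := Nat.mod_lt _ h
  calc a = b * (a/b) + a % b := h1.symm
  _ < b * (a/b) + b := by omega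
  _ = (a/b+1)*b := by ring

lemma cycleWalk {K : Type} (E : K → K → Prop) (n ℓ0 : ℕ) (hn : 1 ≤ n)
    (w0 : Fin (n+1) → K)
    (hw : ∀ v : ℕ, (hv : v < n) → E (w0 ⟨v, by omega⟩) (w0 ⟨v+1, by omega⟩))
    (gp : ℕ → K) (hg0 : gp 0 = w0 (Fin.last n)) (hgl : gp ℓ0 = w0 0)
    (hge : ∀ u : ℕ, u < ℓ0 → E (gp u) (gp (u+1))) :
    ∃ W : ℕ → K, (∀ s, E (W s) (W (s+1))) ∧
      (∀ j k : ℕ, (hk : k ≤ n) → W (j*(n+ℓ0) + k) = w0 ⟨k, by omega⟩) := by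
  set P := n + ℓ0 with hPdef
  have hP : 0 < P := by omega
  refine ⟨fun s => if h : s % P < n then w0 ⟨s % P, by omega⟩ else gp (s % P - n), ?_, ?_⟩
  · -- edges
    intro s
    dsimp only
    set rs := s % P with hrs
    have hrsP : rs < P := Nat.mod_lt _ hP
    have hs1 : (s+1) % P = (rs + 1) % P := by
      rw [hrs, Nat.mod_add_mod]
    by_cases hcase : rs + 1 ≤ n
    · -- within w0 block
      have h1 : rs < n := by omega
      have hWs : (if h : s % P < n then w0 ⟨s % P, by omega⟩ else gp (s % P - n))
          = w0 ⟨rs, by omega⟩ := by rw [dif_pos (by omega : s % P < n)]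
      have hWs1 : (if h : (s+1) % P < n then w0 ⟨(s+1) % P, by omega⟩ else gp ((s+1) % P - n))
          = w0 ⟨rs+1, by omega⟩ := by
        by_cases h2 : rs + 1 < P
        · have : (s+1) % P = rs + 1 := by rw [hs1, Nat.mod_eq_of_lt h2]
          by_cases h3 : rs + 1 < n
          · rw [dif_pos (by omega : (s+1) % P < n)]
            congr 1 <;> simp [this]
          · -- rs + 1 = n
            have h4 : rs + 1 = n := by omega
            by_cases h5 : n < P
            · rw [dif_neg (by omega : ¬ (s+1) % P < n)]
              have : (s+1) % P - n = 0 := by omega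
              rw [this, hg0]
              congr 1
              exact Fin.ext (by simp [Fin.last]; omega)
            · omega
        · -- rs + 1 = P
          have h2' : rs + 1 = P := by omega
          have hl0 : ℓ0 = 0 := by omega
          have : (s+1) % P = 0 := by rw [hs1, h2']; simp
          rw [dif_pos (by omega : (s+1) % P < n)]
          have hw00 : w0 0 = gp ℓ0 := hgl.symm
          have : w0 (⟨(s+1) % P, by omega⟩ : Fin (n+1)) = w0 0 := by
            congr 1; exact Fin.ext (by simp [this])
          rw [this, hw00, show gp ℓ0 = gp 0 by rw [hl0], hg0]
          congr 1
          exact Fin.ext (by simp [Fin.last]; omega)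
      rw [hWs, hWs1]
      exact hw rs h1
    · -- in gp block
      have h1 : n ≤ rs := by omega
      have hl0pos : 0 < ℓ0 := by omega
      set u := rs - n with hu
      have hult : u < ℓ0 := by omega
      have hWs : (if h : s % P < n then w0 ⟨s % P, by omega⟩ else gp (s % P - n))
          = gp u := by rw [dif_neg (by omega : ¬ s % P < n)]
      have hWs1 : (if h : (s+1) % P < n then w0 ⟨(s+1) % P, by omega⟩ else gp ((s+1) % P - n))
          = gp (u+1) := by
        by_cases h2 : rs + 1 < P
        · have heq : (s+1) % P = rs + 1 := by rw [hs1, Nat.mod_eq_of_lt h2]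
          rw [dif_neg (by omega : ¬ (s+1) % P < n)]
          congr 1; omega
        · have h2' : rs + 1 = P := by omega
          have heq : (s+1) % P = 0 := by rw [hs1, h2']; simp
          rw [dif_pos (by omega : (s+1) % P < n)]
          have hu1 : u + 1 = ℓ0 := by omega
          rw [hu1, hgl]
          congr 1; exact Fin.ext (by simp [heq])
      rw [hWs, hWs1]
      exact hge u hult
  · -- block values
    intro j k hk
    dsimp only
    have hmod : (j*P + k) % P = k % P := by rw [Nat.mul_comm j P, Nat.mul_add_mod]
    by_cases h1 : k < n
    · have : (j*P + k) % P = k := by rw [hmod, Nat.mod_eq_of_lt (by omega)]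
      rw [dif_pos (by omega : (j*P+k) % P < n)]
      congr 1; exact Fin.ext (by simp [this])
    · have h2 : k = n := by omega
      by_cases h3 : ℓ0 = 0
      · have heq0 : (j*P + k) % P = 0 := by
          rw [hmod]; subst h2; simp [hPdef, h3]
        rw [dif_pos (by omega : (j*P+k) % P < n)]
        have e1 : w0 (⟨(j*P+k) % P, by omega⟩ : Fin (n+1)) = w0 0 := by
          congr 1; exact Fin.ext (by simp [heq0])
        rw [e1, ← hgl, h3, hg0]
        congr 1; exact Fin.ext (by simp [Fin.last]; omega)
      · have heqn : (j*P + k) % P = n := by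
          rw [hmod]; subst h2; exact Nat.mod_eq_of_lt (by omega)
        rw [dif_neg (by omega : ¬ (j*P+k) % P < n)]
        have : (j*P+k) % P - n = 0 := by omega
        rw [this, hg0]
        congr 1; exact Fin.ext (by simp [Fin.last]; omega)

lemma assembleIneq (N : ℕ) (hN : 1 ≤ N) (Fs Hs : ℕ → ℝ) (Qv mb D dn : ℝ)
    (hQv : 0 ≤ Qv) (hmb : 0 ≤ mb) (hD : 0 < D) (hdn : 0 ≤ dn)
    (h0 : Fs 0 ≤ Hs 0)
    (hi : ∀ i, 1 ≤ i → i < N → Fs i ≤ Hs i + mb * Qv)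
    (hH : ∀ i, 0 ≤ Hs i)
    (hO : ∀ i, i + 1 < N → D * Qv ≤ dn * Hs i) :
    ∑ i ∈ Finset.range N, Fs i ≤ (1 + dn * mb / D) * (∑ i ∈ Finset.range N, Hs i) := by
  set ONs := ∑ i ∈ Finset.range N, Hs i with hONs
  have hONs0 : 0 ≤ ONs := Finset.sum_nonneg (fun i _ => hH i)
  have hsplitF : ∑ i ∈ Finset.range N, Fs i = Fs 0 + ∑ i ∈ Finset.Ico 1 N, Fs i := by
    rw [Finset.range_eq_Ico, ← Finset.sum_Ico_consecutive Fs (Nat.zero_le 1) hN]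
    congr 1; simp
  have hsplitH : ONs = Hs 0 + ∑ i ∈ Finset.Ico 1 N, Hs i := by
    rw [hONs, Finset.range_eq_Ico, ← Finset.sum_Ico_consecutive Hs (Nat.zero_le 1) hN]
    congr 1; simp
  have h1 : ∑ i ∈ Finset.Ico 1 N, Fs i
      ≤ (∑ i ∈ Finset.Ico 1 N, Hs i) + ((N-1 : ℕ) : ℝ) * (mb * Qv) := by
    calc ∑ i ∈ Finset.Ico 1 N, Fs i ≤ ∑ i ∈ Finset.Ico 1 N, (Hs i + mb * Qv) := by
          refine Finset.sum_le_sum ?_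
          intro i hi2
          rw [Finset.mem_Ico] at hi2
          exact hi i hi2.1 hi2.2
    _ = (∑ i ∈ Finset.Ico 1 N, Hs i) + ((N-1 : ℕ) : ℝ) * (mb * Qv) := by
          rw [Finset.sum_add_distrib, Finset.sum_const, Nat.card_Ico, nsmul_eq_mul]
  have h2 : ((N-1 : ℕ) : ℝ) * (D * Qv) ≤ dn * ONs := by
    have e1 : ((N-1 : ℕ) : ℝ) * (D * Qv) = ∑ i ∈ Finset.range (N-1), D * Qv := by
      rw [Finset.sum_const, Finset.card_range, nsmul_eq_mul]
    rw [e1]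
    calc ∑ i ∈ Finset.range (N-1), D * Qv ≤ ∑ i ∈ Finset.range (N-1), dn * Hs i := by
          refine Finset.sum_le_sum ?_
          intro i hi2
          rw [Finset.mem_range] at hi2
          exact hO i (by omega)
    _ = dn * ∑ i ∈ Finset.range (N-1), Hs i := by rw [Finset.mul_sum]
    _ ≤ dn * ONs := by
          refine mul_le_mul_of_nonneg_left ?_ hdn
          refine Finset.sum_le_sum_of_subset_of_nonneg ?_ (fun i _ _ => hH i)
          exact Finset.range_subset_range.2 (by omega)
  have h3 : ((N-1 : ℕ) : ℝ) * (mb * Qv) ≤ (mb / D) * (dn * ONs) := by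
    have := mul_le_mul_of_nonneg_left h2 (div_nonneg hmb hD.le)
    calc ((N-1 : ℕ) : ℝ) * (mb * Qv) = (mb/D) * (((N-1:ℕ):ℝ) * (D * Qv)) := by
          field_simp
    _ ≤ (mb/D) * (dn * ONs) := this
  have h4 : ∑ i ∈ Finset.range N, Fs i ≤ ONs + (mb/D) * (dn * ONs) := by
    rw [hsplitF]
    calc Fs 0 + ∑ i ∈ Finset.Ico 1 N, Fs i
        ≤ Hs 0 + ((∑ i ∈ Finset.Ico 1 N, Hs i) + ((N-1 : ℕ) : ℝ) * (mb * Qv)) := by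
          have := h1; linarith
    _ = ONs + ((N-1 : ℕ) : ℝ) * (mb * Qv) := by rw [hsplitH]; ring
    _ ≤ ONs + (mb/D) * (dn * ONs) := by linarith
  calc ∑ i ∈ Finset.range N, Fs i ≤ ONs + (mb/D) * (dn * ONs) := h4
  _ = (1 + dn * mb / D) * ONs := by field_simp
/-- Peek Reset with latency L ≥ 8(Δ+n−1) on an n-th order time-homogeneous
instance whose transition digraph `E` has diameter Δ is
(1 + 2(Δ+n)(Δ+n−1)/(L − 8(Δ+n−1) + 1))-competitive.

`R h y` is the (nonnegative, time-homogeneous) reward of moving to state `y` when the `n`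
preceding states are `h 0, …, h (n-1)`; rewards at times outside the horizon `{1,…,T}` are
zero (`r`).  `q t` is the maximum over (n+1)-tuples (y_{t−n},…,y_t) of the time-`t` reward
R(y_t | y_{t−n},…,y_{t−1}).  `τ i` is the start time of phase `i` (phase 0 starts at time 1);
the end `τ (i+1)` of phase `i` lies in [τ i + ⌊L/2⌋ + 1, τ i + L] and minimizes `q` there
(ties broken arbitrarily).  `yhat` is the valid sequence produced by Peek Reset from the
dummy states `d`: in each phase starting within the horizon its block maximizes the
undiscounted reward over all valid continuations of its history.  The conclusion bounds the
total reward of every valid offline sequence starting from the dummy states, hence OPT. -/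
theorem peek_reset_competitive
    (K : Type) [Fintype K] [Nonempty K]
    (E : K → K → Prop)
    (n : ℕ) (hn : 1 ≤ n)
    (Δ : ℕ) (hΔ : 1 ≤ Δ)
    (hdiam : ∀ a b : K, ∃ (m : ℕ) (p : ℕ → K),
      m ≤ Δ ∧ p 0 = a ∧ p m = b ∧ ∀ k : ℕ, k < m → E (p k) (p (k + 1)))
    (L : ℕ) (hL : 8 * (Δ + n - 1) ≤ L)
    (T : ℤ)
    (R : (Fin n → K) → K → ℝ) (hR : ∀ h y, 0 ≤ R h y)
    (r : ℤ → (Fin n → K) → K → ℝ)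
    (hr : ∀ t : ℤ, r t = if (1 ≤ t ∧ t ≤ T) then R else 0)
    (q : ℤ → ℝ)
    (hq : ∀ t : ℤ, IsGreatest
      {v : ℝ | ∃ w : Fin (n + 1) → K,
        v = r t (fun k : Fin n => w k.castSucc) (w (Fin.last n))} (q t))
    (τ : ℕ → ℤ) (hτ0 : τ 0 = 1)
    (hτmem : ∀ i : ℕ,
      τ i + ((L / 2 : ℕ) : ℤ) + 1 ≤ τ (i + 1) ∧ τ (i + 1) ≤ τ i + (L : ℤ))
    (hτmin : ∀ i : ℕ, ∀ t : ℤ,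
      τ i + ((L / 2 : ℕ) : ℤ) + 1 ≤ t → t ≤ τ i + (L : ℤ) → q (τ (i + 1)) ≤ q t)
    (d : ℤ → K)
    (yhat : ℤ → K) (hyhat0 : ∀ t : ℤ, t ≤ 0 → yhat t = d t)
    (hyhatvalid : ∀ t : ℤ, 1 ≤ t → t ≤ T → E (yhat (t - 1)) (yhat t))
    (hphase : ∀ i : ℕ, τ i ≤ T →
      ∀ y : ℤ → K, (∀ t : ℤ, t < τ i → y t = yhat t) →
        (∀ t : ℤ, τ i ≤ t → t ≤ τ (i + 1) - 1 → E (y (t - 1)) (y t)) →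
        (∑ t ∈ Finset.Icc (τ i) (τ (i + 1) - 1),
            r t (fun k : Fin n => y (t - (n : ℤ) + ((k : ℕ) : ℤ))) (y t))
          ≤ ∑ t ∈ Finset.Icc (τ i) (τ (i + 1) - 1),
              r t (fun k : Fin n => yhat (t - (n : ℤ) + ((k : ℕ) : ℤ))) (yhat t))
    (ON : ℝ)
    (hON : ON = ∑ i ∈ Finset.Icc (1 : ℤ) T,
        r i (fun k : Fin n => yhat (i - (n : ℤ) + ((k : ℕ) : ℤ))) (yhat i)) :
    ∀ y : ℤ → K, (∀ t : ℤ, t ≤ 0 → y t = d t) →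
      (∀ t : ℤ, 1 ≤ t → t ≤ T → E (y (t - 1)) (y t)) →
      (∑ i ∈ Finset.Icc (1 : ℤ) T,
          r i (fun k : Fin n => y (i - (n : ℤ) + ((k : ℕ) : ℤ))) (y i))
        ≤ (1 + 2 * ((Δ : ℝ) + (n : ℝ)) * ((Δ : ℝ) + (n : ℝ) - 1) /
            ((L : ℝ) - 8 * ((Δ : ℝ) + (n : ℝ) - 1) + 1)) * ON := by
  classical
  intro y hy0 hyvalid
  -- nonnegativity of r
  have hrnn : ∀ (t : ℤ) (h : Fin n → K) (v : K), 0 ≤ r t h v := by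
    intro t h v
    rw [hr t]
    split_ifs
    · exact hR h v
    · simp
  -- the coefficient is well behaved
  have hDnat : 1 ≤ L - 8*(Δ+n-1) + 1 := by omega
  have hDcast : ((L - 8*(Δ+n-1) + 1 : ℕ) : ℝ)
      = (L : ℝ) - 8 * ((Δ : ℝ) + (n : ℝ) - 1) + 1 := by
    have h2 : ((Δ+n-1 : ℕ) : ℝ) = (Δ : ℝ) + (n : ℝ) - 1 := by
      rw [Nat.cast_sub (by omega : 1 ≤ Δ + n)]
      push_cast
      ring
    rw [Nat.cast_add, Nat.cast_sub hL, Nat.cast_mul, h2]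
    push_cast
    ring
  -- trivial case: empty horizon
  by_cases hTlt : T < 1
  · have hempty : Finset.Icc (1:ℤ) T = ∅ := Finset.Icc_eq_empty (by omega)
    rw [hempty] at hON ⊢
    simp only [Finset.sum_empty] at hON ⊢
    rw [hON]
    simp
  push_neg at hTlt
  have hT : 1 ≤ T := hTlt
  clear hTlt
  -- an edge exists
  have hedge : E (yhat 0) (yhat 1) := by
    have h := hyhatvalid 1 (le_refl _) hT
    norm_num at h
    exact h
  -- every state has a successor
  have hsucc : ∀ a : K, ∃ b, E a b := by
    intro a
    obtain ⟨m, p, hm, hp0, hpm, hpe⟩ := hdiam a (yhat 0)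
    rcases Nat.eq_zero_or_pos m with h | h
    · refine ⟨yhat 1, ?_⟩
      have : a = yhat 0 := by rw [← hp0, ← hpm, h]
      rw [this]; exact hedge
    · refine ⟨p 1, ?_⟩
      rw [← hp0]; exact hpe 0 h
  set f : K → K := fun a => Classical.choose (hsucc a) with hfdef
  have hf : ∀ a : K, E a (f a) := fun a => Classical.choose_spec (hsucc a)
  -- extension of the offline sequence beyond the horizon
  set y' : ℤ → K := fun t => if t ≤ T then y t else f^[(t - T).toNat] (y T) with hy'def
  have hy'eq : ∀ t : ℤ, t ≤ T → y' t = y t := by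
    intro t ht
    simp only [hy'def]
    rw [if_pos ht]
  have hy'valid : ∀ t : ℤ, 1 ≤ t → E (y' (t - 1)) (y' t) := by
    intro t ht
    by_cases h1 : t ≤ T
    · rw [hy'eq t h1, hy'eq (t-1) (by omega)]
      exact hyvalid t ht h1
    · push_neg at h1
      by_cases h2 : t - 1 ≤ T
      · have h3 : t - 1 = T := by omega
        have h4 : (t - T).toNat = 1 := by omega
        rw [hy'eq (t-1) h2]
        simp only [hy'def]
        rw [if_neg (by omega), h4, h3]
        simpa using hf (y T)
      · push_neg at h2
        have h4 : (t - T).toNat = (t - 1 - T).toNat + 1 := by omega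
        simp only [hy'def]
        rw [if_neg (by omega), if_neg (by omega), h4, Function.iterate_succ_apply']
        exact hf _
  -- the maximal reward of a traversable (n+1)-tuple
  set g : (Fin (n+1) → K) → ℝ := fun w =>
    if (∀ v : ℕ, (hv : v < n) → E (w ⟨v, by omega⟩) (w ⟨v+1, by omega⟩))
    then R (fun k : Fin n => w k.castSucc) (w (Fin.last n)) else 0 with hgdef
  have hgnn : ∀ w, 0 ≤ g w := by
    intro w
    simp only [hgdef]
    split_ifs
    · exact hR _ _
    · exact le_refl 0
  have hKne : (Finset.univ : Finset (Fin (n+1) → K)).Nonempty := Finset.univ_nonempty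
  set Qv : ℝ := Finset.univ.sup' hKne g with hQvdef
  have hQv0 : 0 ≤ Qv := le_trans (hgnn Classical.ofNonempty)
    (Finset.le_sup' g (Finset.mem_univ _))
  have hQvle : ∀ w : Fin (n+1) → K,
      (∀ v : ℕ, (hv : v < n) → E (w ⟨v, by omega⟩) (w ⟨v+1, by omega⟩)) →
      R (fun k : Fin n => w k.castSucc) (w (Fin.last n)) ≤ Qv := by
    intro w hw
    have h1 : g w = R (fun k : Fin n => w k.castSucc) (w (Fin.last n)) := by
      simp only [hgdef]
      rw [if_pos hw]
    rw [← h1]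
    exact Finset.le_sup' g (Finset.mem_univ w)
  have hQvex : ∃ w : Fin (n+1) → K, Qv = g w := by
    obtain ⟨w, _, hw⟩ := Finset.exists_mem_eq_sup' hKne g
    exact ⟨w, hw⟩
  -- abbreviations for per-step rewards
  set F : ℤ → ℝ := fun t => r t (fun k : Fin n => y' (t - (n : ℤ) + ((k : ℕ) : ℤ))) (y' t)
    with hFdef
  set H : ℤ → ℝ := fun t => r t (fun k : Fin n => yhat (t - (n : ℤ) + ((k : ℕ) : ℤ))) (yhat t)
    with hHdef
  have hFnn : ∀ t, 0 ≤ F t := fun t => hrnn _ _ _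
  have hHnn : ∀ t, 0 ≤ H t := fun t => hrnn _ _ _
  have hFzero : ∀ t : ℤ, T < t → F t = 0 := by
    intro t ht
    simp only [hFdef]
    rw [hr t, if_neg (by omega)]
    simp
  have hHzero : ∀ t : ℤ, ¬ (1 ≤ t ∧ t ≤ T) → H t = 0 := by
    intro t ht
    simp only [hHdef]
    rw [hr t, if_neg ht]
    simp
  -- every actual reward along y' (away from the dummy region) is at most Qv
  have hFle : ∀ t : ℤ, (n : ℤ) ≤ t → F t ≤ Qv := by
    intro t ht
    simp only [hFdef]
    rw [hr t]
    split_ifs with hcond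
    · set w : Fin (n+1) → K := fun j => y' (t - (n:ℤ) + ((j:ℕ) : ℤ)) with hwdef
      have hwv : ∀ v : ℕ, (hv : v < n) → E (w ⟨v, by omega⟩) (w ⟨v+1, by omega⟩) := by
        intro v hv
        have h1 := hy'valid (t - n + v + 1) (by omega)
        have h2 : t - (n:ℤ) + v + 1 - 1 = t - n + v := by ring
        rw [h2] at h1
        simp only [hwdef]
        have e1 : t - (n:ℤ) + ((v:ℕ) : ℤ) = t - n + v := by push_cast; ring
        have e2 : t - (n:ℤ) + (((v+1:ℕ)) : ℤ) = t - n + v + 1 := by push_cast; ring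
        rw [e1, e2]
        exact h1
      have hb := hQvle w hwv
      have e3 : (fun k : Fin n => y' (t - (n:ℤ) + ((k:ℕ) : ℤ))) = (fun k : Fin n => w k.castSucc) := by
        funext k
        simp only [hwdef]
        congr 1
      have e4 : y' t = w (Fin.last n) := by
        simp only [hwdef]
        congr 1
        simp [Fin.val_last]
      rw [e3, e4]
      exact hb
    · simp [hQv0]
  -- basic facts about the phase boundaries
  have hτgap : ∀ i : ℕ, τ i + ((L / 2 : ℕ) : ℤ) + 1 ≤ τ (i+1) := fun i => (hτmem i).1
  have hτle : ∀ i : ℕ, τ i ≤ τ (i+1) := by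
    intro i
    have := hτgap i
    omega
  have hτmono : Monotone τ := monotone_nat_of_le_succ hτle
  have hL2n : n ≤ L / 2 := by omega
  have hL2Δ : Δ ≤ L / 2 := by omega
  have hτ1 : ∀ i : ℕ, 1 ≤ i → (n : ℤ) + 2 ≤ τ i := by
    intro i hi
    have h1 : (1:ℤ) + ((L/2 : ℕ) : ℤ) + 1 ≤ τ 1 := by
      have := hτgap 0
      rw [hτ0] at this
      exact this
    have h2 : τ 1 ≤ τ i := hτmono hi
    omega
  have hτpos : ∀ i : ℕ, 1 ≤ τ i := by
    intro i
    have := hτmono (Nat.zero_le i)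
    omega
  -- Lemma P : per-phase loss of the offline sequence
  have lemP : ∀ i : ℕ, 1 ≤ i → τ i ≤ T →
      ∑ t ∈ Finset.Ico (τ i) (τ (i+1)), F t
        ≤ (∑ t ∈ Finset.Ico (τ i) (τ (i+1)), H t) + ((Δ:ℝ) + (n:ℝ) - 1) * Qv := by
    intro i hi1 hiT
    have hcb : (n:ℤ) + 2 ≤ τ i := hτ1 i hi1
    have hgap := hτgap i
    obtain ⟨mp, p, hmp, hp0, hpm, hpe⟩ := hdiam (yhat (τ i - 1)) (y' (τ i - 1))
    set z : ℤ → K := fun t =>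
      if t < τ i then yhat t
      else if t ≤ τ i - 1 + (mp:ℤ) then p (t - (τ i - 1)).toNat
      else y' (t - (mp:ℤ)) with hzdef
    have hz1 : ∀ t : ℤ, t < τ i → z t = yhat t := by
      intro t ht; simp only [hzdef]; rw [if_pos ht]
    have hz3 : ∀ s : ℤ, τ i - 1 + (mp:ℤ) ≤ s → z s = y' (s - mp) := by
      intro s hs
      by_cases h1 : s < τ i
      · have hm0 : mp = 0 := by omega
        have hs0 : s = τ i - 1 := by omega
        rw [hz1 s h1, hs0]
        have e2 : p 0 = y' (τ i - 1) := by rw [← hpm, hm0]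
        rw [← hp0, e2]
        congr 1
        omega
      · push_neg at h1
        by_cases h2 : s ≤ τ i - 1 + (mp:ℤ)
        · have htn : (s - (τ i - 1)).toNat = mp := by omega
          simp only [hzdef]
          rw [if_neg (by omega), if_pos h2, htn, hpm]
          congr 1
          omega
        · simp only [hzdef]
          rw [if_neg (by omega), if_neg h2]
    have hz2 : ∀ t : ℤ, τ i ≤ t → E (z (t-1)) (z t) := by
      intro t ht
      by_cases h1 : t ≤ τ i - 1 + (mp:ℤ)
      · have hmp1 : 1 ≤ mp := by omega
        have hzt : z t = p (t - (τ i - 1)).toNat := by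
          simp only [hzdef]; rw [if_neg (by omega), if_pos h1]
        have hzt1 : z (t-1) = p ((t-1) - (τ i - 1)).toNat := by
          by_cases h2 : t - 1 < τ i
          · have h0' : (t - 1 - (τ i - 1)).toNat = 0 := by omega
            have ht1 : t - 1 = τ i - 1 := by omega
            rw [h0', hz1 _ h2, ht1, hp0]
          · push_neg at h2
            simp only [hzdef]
            rw [if_neg (by omega), if_pos (by omega)]
        rw [hzt, hzt1]
        have hlt : ((t-1) - (τ i - 1)).toNat < mp := by omega
        have hsucc' : (t - (τ i - 1)).toNat = ((t-1) - (τ i -1)).toNat + 1 := by omega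
        rw [hsucc']
        exact hpe _ hlt
      · push_neg at h1
        rw [hz3 t (by omega), hz3 (t-1) (by omega)]
        have h3 := hy'valid (t - mp) (by omega)
        have e : t - (mp:ℤ) - 1 = t - 1 - mp := by ring
        rw [e] at h3
        exact h3
    set GzB : ℤ → ℝ := fun t => r t (fun k : Fin n => z (t - (n:ℤ) + ((k:ℕ):ℤ))) (z t)
      with hGzBdef
    have hGznn : ∀ t, 0 ≤ GzB t := fun t => hrnn _ _ _
    have hz4 : ∀ u : ℤ, τ i + (mp:ℤ) + (n:ℤ) - 1 ≤ u → u ≤ T → GzB u = F (u - mp) := by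
      intro u hu1 hu2
      have hzu : z u = y' (u - mp) := hz3 u (by omega)
      have hist : (fun k : Fin n => z (u - (n:ℤ) + ((k:ℕ):ℤ)))
          = (fun k : Fin n => y' ((u - (mp:ℤ)) - (n:ℤ) + ((k:ℕ):ℤ))) := by
        funext k
        have hk := k.isLt
        rw [hz3 (u - (n:ℤ) + ((k:ℕ):ℤ)) (by omega)]
        congr 1
        ring
      simp only [hGzBdef, hFdef]
      rw [hzu, hist, hr u, hr (u - (mp:ℤ)), if_pos (by constructor <;> omega),
        if_pos (by constructor <;> omega)]
    set Bm : ℤ := min T (τ (i+1) - 1) with hBmdef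
    have hterm : ∀ t ∈ Finset.Ico (τ i + (n:ℤ) - 1) (τ (i+1)), F t ≤
        (if t + (mp:ℤ) ≤ Bm then GzB (t + (mp:ℤ)) else 0)
        + (if Bm - (mp:ℤ) + 1 ≤ t ∧ t ≤ Bm then Qv else 0) := by
      intro t htm
      rw [Finset.mem_Ico] at htm
      have hite20 : (0:ℝ) ≤ (if Bm - (mp:ℤ) + 1 ≤ t ∧ t ≤ Bm then Qv else 0) := by
        split_ifs
        · exact hQv0
        · exact le_refl 0
      by_cases h1 : t + (mp:ℤ) ≤ Bm
      · rw [if_pos h1]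
        have h2 := hz4 (t + (mp:ℤ)) (by omega) (by omega)
        have e : t + (mp:ℤ) - (mp:ℤ) = t := by ring
        rw [e] at h2
        rw [h2]
        linarith
      · rw [if_neg h1]
        by_cases h2 : t ≤ T
        · rw [if_pos (by constructor <;> omega)]
          have := hFle t (by omega)
          linarith
        · rw [hFzero t (by omega)]
          linarith
    have hmain : ∑ t ∈ Finset.Ico (τ i + (n:ℤ) - 1) (τ (i+1)), F t
        ≤ (∑ t ∈ Finset.Ico (τ i + (n:ℤ) - 1) (τ (i+1)),
            (if t + (mp:ℤ) ≤ Bm then GzB (t + (mp:ℤ)) else 0))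
          + ∑ t ∈ Finset.Ico (τ i + (n:ℤ) - 1) (τ (i+1)),
            (if Bm - (mp:ℤ) + 1 ≤ t ∧ t ≤ Bm then Qv else 0) := by
      rw [← Finset.sum_add_distrib]
      exact Finset.sum_le_sum hterm
    have hite2 : ∑ t ∈ Finset.Ico (τ i + (n:ℤ) - 1) (τ (i+1)),
        (if Bm - (mp:ℤ) + 1 ≤ t ∧ t ≤ Bm then Qv else 0) ≤ (Δ:ℝ) * Qv := by
      rw [← Finset.sum_filter]
      have hsub : (Finset.Ico (τ i + (n:ℤ) - 1) (τ (i+1))).filter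
          (fun t => Bm - (mp:ℤ) + 1 ≤ t ∧ t ≤ Bm) ⊆ Finset.Icc (Bm - (mp:ℤ) + 1) Bm := by
        intro x hx
        rw [Finset.mem_filter] at hx
        rw [Finset.mem_Icc]
        exact hx.2
      refine le_trans (Finset.sum_le_sum_of_subset_of_nonneg hsub (fun _ _ _ => hQv0)) ?_
      rw [Finset.sum_const, Int.card_Icc, nsmul_eq_mul]
      have e1 : (Bm + 1 - (Bm - (mp:ℤ) + 1)).toNat = mp := by omega
      rw [e1]
      refine mul_le_mul_of_nonneg_right ?_ hQv0
      exact_mod_cast hmp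
    have hite1 : ∑ t ∈ Finset.Ico (τ i + (n:ℤ) - 1) (τ (i+1)),
        (if t + (mp:ℤ) ≤ Bm then GzB (t + (mp:ℤ)) else 0)
        ≤ ∑ t ∈ Finset.Ico (τ i) (τ (i+1)), GzB t := by
      rw [← Finset.sum_filter]
      have hinj : ∀ x ∈ (Finset.Ico (τ i + (n:ℤ) - 1) (τ (i+1))).filter
          (fun t => t + (mp:ℤ) ≤ Bm), ∀ u ∈ (Finset.Ico (τ i + (n:ℤ) - 1) (τ (i+1))).filter
          (fun t => t + (mp:ℤ) ≤ Bm), x + (mp:ℤ) = u + (mp:ℤ) → x = u := by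
        intro x _ u _ h
        omega
      rw [← Finset.sum_image hinj]
      refine Finset.sum_le_sum_of_subset_of_nonneg ?_ (fun t _ _ => hGznn t)
      intro u hu
      rw [Finset.mem_image] at hu
      obtain ⟨x, hx, rfl⟩ := hu
      rw [Finset.mem_filter, Finset.mem_Ico] at hx
      rw [Finset.mem_Ico]
      constructor
      · omega
      · omega
    have hGH : ∑ t ∈ Finset.Ico (τ i) (τ (i+1)), GzB t
        ≤ ∑ t ∈ Finset.Ico (τ i) (τ (i+1)), H t := by
      have h := hphase i hiT z hz1 (fun t h1 _ => hz2 t h1)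
      rw [IccIco (τ i) (τ (i+1))] at h
      exact h
    have hsplit : ∑ t ∈ Finset.Ico (τ i) (τ (i+1)), F t
        = (∑ t ∈ Finset.Ico (τ i) (τ i + (n:ℤ) - 1), F t)
          + ∑ t ∈ Finset.Ico (τ i + (n:ℤ) - 1) (τ (i+1)), F t :=
      sumIcoSplit F (by omega) (by omega)
    have hhead : ∑ t ∈ Finset.Ico (τ i) (τ i + (n:ℤ) - 1), F t ≤ ((n:ℝ) - 1) * Qv := by
      have h1 : ∑ t ∈ Finset.Ico (τ i) (τ i + (n:ℤ) - 1), F t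
          ≤ ∑ _t ∈ Finset.Ico (τ i) (τ i + (n:ℤ) - 1), Qv := by
        refine Finset.sum_le_sum ?_
        intro t htm
        rw [Finset.mem_Ico] at htm
        exact hFle t (by omega)
      have h2 : ∑ _t ∈ Finset.Ico (τ i) (τ i + (n:ℤ) - 1), (Qv:ℝ)
          = ((n - 1 : ℕ) : ℝ) * Qv := by
        rw [Finset.sum_const, Int.card_Ico, nsmul_eq_mul]
        congr 1
        have e : (τ i + (n:ℤ) - 1 - τ i).toNat = n - 1 := by omega
        rw [e]
      have h3 : ((n - 1 : ℕ) : ℝ) = (n:ℝ) - 1 := by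
        rw [Nat.cast_sub hn, Nat.cast_one]
      rw [h2, h3] at h1
      exact h1
    rw [hsplit]
    have : ((n:ℝ) - 1) * Qv + (Δ:ℝ) * Qv = ((Δ:ℝ) + (n:ℝ) - 1) * Qv := by ring
    linarith
  -- Lemma O : per-phase lower bound on the algorithm's reward
  have lemO : ∀ i : ℕ, τ (i+1) ≤ T →
      ((L - 8*(Δ+n-1) + 1 : ℕ) : ℝ) * Qv
        ≤ (2*((Δ:ℝ)+(n:ℝ))) * ∑ t ∈ Finset.Ico (τ i) (τ (i+1)), H t := by
    intro i hiT1
    have hiT : τ i ≤ T := by have := hτgap i; omega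
    have hHs0 : 0 ≤ ∑ t ∈ Finset.Ico (τ i) (τ (i+1)), H t :=
      Finset.sum_nonneg (fun t _ => hHnn t)
    obtain ⟨w0, hw0⟩ := hQvex
    by_cases hval : (∀ v : ℕ, (hv : v < n) → E (w0 ⟨v, by omega⟩) (w0 ⟨v+1, by omega⟩))
    · -- the max is attained by a traversable tuple
      have hQR : R (fun k : Fin n => w0 k.castSucc) (w0 (Fin.last n)) = Qv := by
        rw [hw0]
        simp only [hgdef]
        rw [if_pos hval]
      obtain ⟨ℓ0, gp, hℓ0, hgp0, hgpl, hgpe⟩ := hdiam (w0 (Fin.last n)) (w0 0)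
      obtain ⟨ℓ1, p1, hℓ1, hp10, hp1l, hp1e⟩ := hdiam (yhat (τ i - 1)) (w0 0)
      obtain ⟨W, hWe, hWb⟩ := cycleWalk E n ℓ0 hn w0 hval gp hgp0 hgpl hgpe
      set V : ℕ → K := fun s => if s ≤ ℓ1 then p1 s else W (s - ℓ1) with hVdef
      have hV0 : ∀ s : ℕ, ℓ1 ≤ s → V s = W (s - ℓ1) := by
        intro s hs
        by_cases h1 : s ≤ ℓ1
        · have hse : s = ℓ1 := by omega
          have hW0 : W 0 = w0 0 := by
            have h2 := hWb 0 0 (by omega)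
            simpa using h2
          simp only [hVdef]
          rw [hse, if_pos (le_refl ℓ1), hp1l, Nat.sub_self, hW0]
        · simp only [hVdef]
          rw [if_neg h1]
      have hVe : ∀ s : ℕ, E (V s) (V (s+1)) := by
        intro s
        by_cases h1 : ℓ1 ≤ s
        · rw [hV0 s h1, hV0 (s+1) (by omega)]
          have e : s + 1 - ℓ1 = (s - ℓ1) + 1 := by omega
          rw [e]
          exact hWe _
        · push_neg at h1
          simp only [hVdef]
          rw [if_pos (by omega), if_pos (by omega)]
          exact hp1e s (by omega)
      set z : ℤ → K := fun t => if t < τ i then yhat t else V (t - (τ i - 1)).toNat with hzdef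
      have hz1 : ∀ t : ℤ, t < τ i → z t = yhat t := by
        intro t ht; simp only [hzdef]; rw [if_pos ht]
      have hzv : ∀ t : ℤ, τ i - 1 ≤ t → z t = V (t - (τ i - 1)).toNat := by
        intro t ht
        by_cases h1 : t < τ i
        · have hte : t = τ i - 1 := by omega
          rw [hz1 t h1, hte]
          have h0 : ((τ i - 1) - (τ i - 1)).toNat = 0 := by omega
          rw [h0]
          have hV00 : V 0 = p1 0 := by simp only [hVdef]; rw [if_pos (by omega)]
          rw [hV00, hp10]
        · push_neg at h1
          simp only [hzdef]
          rw [if_neg (by omega)]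
      have hz2 : ∀ t : ℤ, τ i ≤ t → E (z (t-1)) (z t) := by
        intro t ht
        rw [hzv t (by omega), hzv (t-1) (by omega)]
        have e : (t - (τ i - 1)).toNat = ((t - 1) - (τ i - 1)).toNat + 1 := by omega
        rw [e]
        exact hVe _
      set Gz : ℤ → ℝ := fun t => r t (fun k : Fin n => z (t - (n:ℤ) + ((k:ℕ):ℤ))) (z t)
        with hGzdef
      set ℓn : ℕ := (τ (i+1) - τ i).toNat with hℓndef
      have hℓncast : (ℓn : ℤ) = τ (i+1) - τ i := by
        have := hτle i
        rw [hℓndef]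
        omega
      have hℓnge : L/2 + 1 ≤ ℓn := by
        have := hτgap i
        omega
      have hsane : ℓ1 + n + 1 ≤ ℓn := by omega
      set kk : ℕ := (ℓn - (ℓ1 + n)) / (n + ℓ0) + 1 with hkkdef
      have hP0 : 0 < n + ℓ0 := by omega
      have hjle : ∀ j : ℕ, j < kk → ℓ1 + j*(n+ℓ0) + n ≤ ℓn := by
        intro j hj
        have h1 : j ≤ (ℓn - (ℓ1 + n)) / (n + ℓ0) := by omega
        have h2 : j * (n + ℓ0) ≤ ℓn - (ℓ1 + n) := (Nat.le_div_iff_mul_le hP0).1 h1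
        omega
      have hterm : ∀ j : ℕ, j < kk →
          Gz ((τ i : ℤ) - 1 + ((ℓ1 + j*(n+ℓ0) + n : ℕ) : ℤ)) = Qv := by
        intro j hj
        have hjn := hjle j hj
        have hzval : ∀ k : ℕ, (hkn : k ≤ n) →
            z ((τ i : ℤ) - 1 + ((ℓ1 + j*(n+ℓ0) + k : ℕ) : ℤ)) = w0 ⟨k, by omega⟩ := by
          intro k hk
          rw [hzv _ (by omega)]
          have e1 : (((τ i : ℤ) - 1 + ((ℓ1 + j*(n+ℓ0) + k : ℕ) : ℤ)) - (τ i - 1)).toNat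
              = ℓ1 + j*(n+ℓ0) + k := by omega
          rw [e1, hV0 _ (by omega)]
          have e2 : ℓ1 + j*(n+ℓ0) + k - ℓ1 = j*(n+ℓ0) + k := by omega
          rw [e2]
          exact hWb j k hk
        have htj1 : 1 ≤ (τ i : ℤ) - 1 + ((ℓ1 + j*(n+ℓ0) + n : ℕ) : ℤ) := by
          have := hτpos i
          omega
        have htjT : (τ i : ℤ) - 1 + ((ℓ1 + j*(n+ℓ0) + n : ℕ) : ℤ) ≤ T := by omega
        simp only [hGzdef]
        rw [hr _, if_pos ⟨htj1, htjT⟩, ← hQR]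
        congr 1
        · funext k
          have hk := k.isLt
          have e3 : (τ i : ℤ) - 1 + ((ℓ1 + j*(n+ℓ0) + n : ℕ) : ℤ) - (n:ℤ) + ((k:ℕ):ℤ)
              = (τ i : ℤ) - 1 + ((ℓ1 + j*(n+ℓ0) + (k:ℕ) : ℕ) : ℤ) := by push_cast; ring
          rw [e3, hzval (k:ℕ) (by omega)]
          congr 1
        · rw [hzval n (le_refl n)]
          congr 1
      set S : Finset ℤ := (Finset.range kk).image
        (fun j => (τ i : ℤ) - 1 + ((ℓ1 + j*(n+ℓ0) + n : ℕ) : ℤ)) with hSdef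
      have hinj : ∀ a ∈ Finset.range kk, ∀ b ∈ Finset.range kk,
          (τ i : ℤ) - 1 + ((ℓ1 + a*(n+ℓ0) + n : ℕ) : ℤ)
            = (τ i : ℤ) - 1 + ((ℓ1 + b*(n+ℓ0) + n : ℕ) : ℤ) → a = b := by
        intro a _ b _ hab
        have h2 : a*(n+ℓ0) = b*(n+ℓ0) := by omega
        exact Nat.eq_of_mul_eq_mul_right hP0 h2
      have hSsub : S ⊆ Finset.Ico (τ i) (τ (i+1)) := by
        intro u hu
        rw [hSdef, Finset.mem_image] at hu
        obtain ⟨j, hj, rfl⟩ := hu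
        rw [Finset.mem_range] at hj
        have := hjle j hj
        rw [Finset.mem_Ico]
        constructor
        · omega
        · omega
      have hSsum : ∑ t ∈ S, Gz t = (kk : ℝ) * Qv := by
        rw [hSdef, Finset.sum_image hinj]
        rw [Finset.sum_congr rfl (fun j hj => hterm j (Finset.mem_range.1 hj))]
        rw [Finset.sum_const, Finset.card_range, nsmul_eq_mul]
      have hlow : (kk : ℝ) * Qv ≤ ∑ t ∈ Finset.Ico (τ i) (τ (i+1)), H t := by
        rw [← hSsum]
        refine le_trans
          (Finset.sum_le_sum_of_subset_of_nonneg hSsub (fun t _ _ => hrnn _ _ _)) ?_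
        have h := hphase i hiT z hz1 (fun t h1 _ => hz2 t h1)
        rw [IccIco (τ i) (τ (i+1))] at h
        exact h
      have hA : ℓn - (ℓ1 + n) < kk * (n + ℓ0) := by
        rw [hkkdef]
        exact natLtDivAddOneMul (ℓn - (ℓ1+n)) (n+ℓ0) hP0
      have hB : kk * (n + ℓ0) ≤ kk * (Δ + n) := Nat.mul_le_mul (le_refl kk) (by omega)
      have hkey : L - 8*(Δ+n-1) + 1 ≤ 2*(kk*(Δ+n)) := by omega
      have hc1 : ((L - 8*(Δ+n-1) + 1 : ℕ) : ℝ) ≤ ((2*(kk*(Δ+n)) : ℕ) : ℝ) := by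
        exact_mod_cast hkey
      have hc2 : ((2*(kk*(Δ+n)) : ℕ) : ℝ) = 2*((Δ:ℝ)+(n:ℝ)) * (kk:ℝ) := by push_cast; ring
      have h5 : ((L - 8*(Δ+n-1) + 1 : ℕ) : ℝ) * Qv ≤ (2*((Δ:ℝ)+(n:ℝ)) * (kk:ℝ)) * Qv := by
        refine mul_le_mul_of_nonneg_right ?_ hQv0
        rw [← hc2]
        exact hc1
      have h6 : (2*((Δ:ℝ)+(n:ℝ)) * (kk:ℝ)) * Qv = 2*((Δ:ℝ)+(n:ℝ)) * ((kk:ℝ) * Qv) := by ring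
      have h7 : 2*((Δ:ℝ)+(n:ℝ)) * ((kk:ℝ) * Qv)
          ≤ 2*((Δ:ℝ)+(n:ℝ)) * ∑ t ∈ Finset.Ico (τ i) (τ (i+1)), H t := by
        refine mul_le_mul_of_nonneg_left hlow ?_
        positivity
      linarith
    · -- no traversable tuple attains the sup : Qv = 0
      have hQ0 : Qv = 0 := by
        rw [hw0]
        simp only [hgdef]
        rw [if_neg hval]
      rw [hQ0, mul_zero]
      exact mul_nonneg (by positivity) hHs0
  -- phase horizon count
  have hgrow : ∀ j : ℕ, (j:ℤ) + 1 ≤ τ j := by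
    intro j
    induction j with
    | zero => rw [hτ0]; norm_num
    | succ j ih =>
      have := hτgap j
      push_cast
      push_cast at ih
      omega
  have hNex : ∃ N : ℕ, T < τ N := ⟨T.toNat, by have := hgrow T.toNat; omega⟩
  set N := Nat.find hNex with hNdef
  have hNT : T < τ N := Nat.find_spec hNex
  have hNle : ∀ i : ℕ, i < N → τ i ≤ T := by
    intro i hi
    have := Nat.find_min hNex hi
    omega
  have hN1 : 1 ≤ N := by
    by_contra h
    push_neg at h
    have hN0 : N = 0 := by omega
    rw [hN0, hτ0] at hNT
    omega
  -- rewrite the offline objective using y'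
  have hstep1 : ∑ i ∈ Finset.Icc (1:ℤ) T,
      r i (fun k : Fin n => y (i - (n:ℤ) + ((k:ℕ):ℤ))) (y i)
      = ∑ t ∈ Finset.Icc (1:ℤ) T, F t := by
    refine Finset.sum_congr rfl ?_
    intro t ht
    rw [Finset.mem_Icc] at ht
    have e1 : (fun k : Fin n => y (t - (n:ℤ) + ((k:ℕ):ℤ)))
        = (fun k : Fin n => y' (t - (n:ℤ) + ((k:ℕ):ℤ))) := by
      funext k
      have hk := k.isLt
      rw [hy'eq _ (by omega)]
    have e2 : y t = y' t := (hy'eq t ht.2).symm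
    rw [e1, e2]
  -- splitting a vanishing-outside-horizon sum into phases
  have hcover : ∀ (G : ℤ → ℝ), (∀ t : ℤ, T < t → G t = 0) →
      ∑ t ∈ Finset.Icc (1:ℤ) T, G t
        = ∑ i ∈ Finset.range N, ∑ t ∈ Finset.Ico (τ i) (τ (i+1)), G t := by
    intro G hG0
    rw [sumPhases G τ hτle N, hτ0]
    have h1 : ∑ t ∈ Finset.Ico (1:ℤ) (τ N), G t
        = (∑ t ∈ Finset.Ico (1:ℤ) (T+1), G t) + ∑ t ∈ Finset.Ico (T+1) (τ N), G t :=
      sumIcoSplit G (by omega) (by omega)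
    have h2 : ∑ t ∈ Finset.Ico (T+1) (τ N), G t = 0 := by
      refine Finset.sum_eq_zero ?_
      intro t htm
      rw [Finset.mem_Ico] at htm
      exact hG0 t (by omega)
    have h3 : Finset.Ico (1:ℤ) (T+1) = Finset.Icc (1:ℤ) T := by
      ext x
      simp only [Finset.mem_Icc, Finset.mem_Ico]
      omega
    rw [h1, h2, h3]
    ring
  have hFcov := hcover F hFzero
  have hHcov := hcover H (fun t ht => hHzero t (by omega))
  have hON2 : ON = ∑ t ∈ Finset.Icc (1:ℤ) T, H t := hON
  -- phase 0 : the offline extension is a feasible continuation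
  have h0 : (∑ t ∈ Finset.Ico (τ 0) (τ (0+1)), F t)
      ≤ ∑ t ∈ Finset.Ico (τ 0) (τ (0+1)), H t := by
    have hpre : ∀ t : ℤ, t < τ 0 → y' t = yhat t := by
      intro t ht
      rw [hτ0] at ht
      rw [hy'eq t (by omega), hy0 t (by omega), hyhat0 t (by omega)]
    have h := hphase 0 (by rw [hτ0]; exact hT) y' hpre
      (fun t h1 _ => hy'valid t (by omega))
    rw [IccIco (τ 0) (τ (0+1))] at h
    exact h
  have hfin := assembleIneq N hN1
    (fun i => ∑ t ∈ Finset.Ico (τ i) (τ (i+1)), F t)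
    (fun i => ∑ t ∈ Finset.Ico (τ i) (τ (i+1)), H t)
    Qv ((Δ:ℝ)+(n:ℝ)-1) ((L - 8*(Δ+n-1) + 1 : ℕ) : ℝ) (2*((Δ:ℝ)+(n:ℝ)))
    hQv0
    (by
      have h1 : (1:ℝ) ≤ (Δ:ℝ) := by exact_mod_cast hΔ
      have h2 : (0:ℝ) ≤ (n:ℝ) := by positivity
      linarith)
    (by exact_mod_cast Nat.cast_pos.2 (by omega : 0 < L - 8*(Δ+n-1) + 1))
    (by positivity)
    h0
    (fun i a b => lemP i a (hNle i b))
    (fun i => Finset.sum_nonneg fun t _ => hHnn t)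
    (fun i hi => lemO i (hNle (i+1) hi))
  rw [hstep1, hFcov]
  have hONR : ∑ i ∈ Finset.range N, ∑ t ∈ Finset.Ico (τ i) (τ (i+1)), H t = ON := by
    rw [hON2]
    exact hHcov.symm
  rw [hONR, hDcast] at hfin
  exact hfin
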